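/- arXiv:2507.22184 — 2 statements merged into one kernel-verified Lean document; each statement's English description precedes it below -/
import Mathlib

section
/- Let X be a finite set with two linear orders ≤₁ and ≤₂, and let s : X → {±1} be any function. For x ∈ X define ι₊₊(x) as the length of the longest sequence x₁, ..., x_k = x in X with s(x_i) = -s(x_{i-1}) for all i, and x_i ≤₁ x_{i+1}, x_i ≤₂ x_{i+1} for all i; define ι₊₋(x) analogously but requiring the sequence to be decreasing in ≤₂. Then for all x, y ∈ X with s(x) ≠ s(y), we have (ι₊₊(x), ι₊₋(x)) ≠ (ι₊₊(y), ι₊₋(y)). -/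
/-- The length (number of elements) of the longest sequence ending at `x` that is
alternating for the coloring `s` and strictly increasing in both relations. -/
noncomputable def altChainLen {X : Type*} (lt₁ lt₂ : X → X → Prop) (s : X → ℤˣ)
    (x : X) : ℕ :=
  sSup {k : ℕ | ∃ g : Fin k → X, (∃ hk : 0 < k, g ⟨k - 1, by omega⟩ = x) ∧
    ∀ i j : Fin k, (i : ℕ) + 1 = (j : ℕ) →
      s (g j) = -s (g i) ∧ lt₁ (g i) (g j) ∧ lt₂ (g i) (g j)}

private theorem chain_lt_of_succ {X : Type*} {lt₁ : X → X → Prop} (htr : Transitive lt₁)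
    {k : ℕ} {g : Fin k → X}
    (h : ∀ i j : Fin k, (i : ℕ) + 1 = (j : ℕ) → lt₁ (g i) (g j)) :
    ∀ i j : Fin k, (i : ℕ) < (j : ℕ) → lt₁ (g i) (g j) := by
  have key : ∀ d : ℕ, ∀ i j : Fin k, (j : ℕ) = (i : ℕ) + d + 1 → lt₁ (g i) (g j) := by
    intro d
    induction d with
    | zero => intro i j hij; exact h i j (by omega)
    | succ d ih =>
      intro i j hij
      have hm : (i : ℕ) + d + 1 < k := by have := j.isLt; omega
      exact htr (ih i ⟨_, hm⟩ rfl) (h ⟨_, hm⟩ j (by simp only []; omega))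
  intro i j hij
  obtain ⟨d, hd⟩ : ∃ d, (j : ℕ) = (i : ℕ) + d + 1 := ⟨(j : ℕ) - i - 1, by omega⟩
  exact key d i j hd

private theorem altChain_bdd {X : Type*} [Fintype X] {lt₁ lt₂ : X → X → Prop}
    (htr : Transitive lt₁) (hirr : ∀ a, ¬ lt₁ a a) (s : X → ℤˣ) (x : X) :
    ∀ k ∈ {k : ℕ | ∃ g : Fin k → X, (∃ hk : 0 < k, g ⟨k - 1, by omega⟩ = x) ∧
      ∀ i j : Fin k, (i : ℕ) + 1 = (j : ℕ) →
        s (g j) = -s (g i) ∧ lt₁ (g i) (g j) ∧ lt₂ (g i) (g j)},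
      k ≤ Fintype.card X := by
  rintro k ⟨g, -, hg⟩
  have hmono := chain_lt_of_succ htr (fun i j hij => (hg i j hij).2.1)
  have hinj : Function.Injective g := by
    intro a b hab
    by_contra hne
    rcases lt_or_gt_of_ne (fun h : (a : ℕ) = b => hne (Fin.ext h)) with h | h
    · exact hirr _ (hab ▸ hmono a b h)
    · exact hirr _ (hab ▸ hmono b a h)
  simpa using Fintype.card_le_of_injective g hinj

private theorem one_mem_altChain {X : Type*} {lt₁ lt₂ : X → X → Prop} (s : X → ℤˣ) (x : X) :
    1 ∈ {k : ℕ | ∃ g : Fin k → X, (∃ hk : 0 < k, g ⟨k - 1, by omega⟩ = x) ∧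
      ∀ i j : Fin k, (i : ℕ) + 1 = (j : ℕ) →
        s (g j) = -s (g i) ∧ lt₁ (g i) (g j) ∧ lt₂ (g i) (g j)} :=
  ⟨fun _ => x, ⟨Nat.one_pos, rfl⟩, fun i j hij => by
    have := i.isLt; have := j.isLt; omega⟩

private theorem altChainLen_lt {X : Type*} [Fintype X] {lt₁ lt₂ : X → X → Prop}
    (htr : Transitive lt₁) (hirr : ∀ a, ¬ lt₁ a a) (s : X → ℤˣ)
    {x y : X} (hs : s y = -s x) (h1 : lt₁ x y) (h2 : lt₂ x y) :
    altChainLen lt₁ lt₂ s x < altChainLen lt₁ lt₂ s y := by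
  set Sx := {k : ℕ | ∃ g : Fin k → X, (∃ hk : 0 < k, g ⟨k - 1, by omega⟩ = x) ∧
    ∀ i j : Fin k, (i : ℕ) + 1 = (j : ℕ) →
      s (g j) = -s (g i) ∧ lt₁ (g i) (g j) ∧ lt₂ (g i) (g j)} with hSx
  have hbx : BddAbove Sx := ⟨Fintype.card X, altChain_bdd htr hirr s x⟩
  have hnex : Sx.Nonempty := ⟨1, one_mem_altChain s x⟩
  set m := altChainLen lt₁ lt₂ s x with hm
  have hmem : m ∈ Sx := Nat.sSup_mem hnex hbx
  obtain ⟨g, ⟨hk, hend⟩, hg⟩ := hmem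
  -- extend the chain by y
  have hstep : m + 1 ∈ {k : ℕ | ∃ g : Fin k → X, (∃ hk : 0 < k, g ⟨k - 1, by omega⟩ = y) ∧
      ∀ i j : Fin k, (i : ℕ) + 1 = (j : ℕ) →
        s (g j) = -s (g i) ∧ lt₁ (g i) (g j) ∧ lt₂ (g i) (g j)} := by
    refine ⟨fun i => if h : (i : ℕ) < m then g ⟨i, h⟩ else y, ⟨Nat.succ_pos m, ?_⟩, ?_⟩
    · simp
    · intro i j hij
      by_cases hjm : (j : ℕ) < m
      · have him : (i : ℕ) < m := by omega
        simp only [dif_pos hjm, dif_pos him]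
        exact hg ⟨i, him⟩ ⟨j, hjm⟩ hij
      · have hjm' : (j : ℕ) = m := by have := j.isLt; omega
        have him : (i : ℕ) < m := by omega
        have him' : (i : ℕ) = m - 1 := by omega
        simp only [dif_neg (by omega : ¬ (j : ℕ) < m), dif_pos him]
        have : g ⟨i, him⟩ = x := by
          rw [← hend]; congr 1; simp only [Fin.mk.injEq]; omega
        rw [this]
        exact ⟨hs, h1, h2⟩
  have : m + 1 ≤ altChainLen lt₁ lt₂ s y :=
    le_csSup ⟨Fintype.card X, altChain_bdd htr hirr s y⟩ hstep
  omega

private theorem units_neg {a b : ℤˣ} (h : a ≠ b) : b = -a := by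
  rcases Int.units_eq_one_or a with ha | ha <;> rcases Int.units_eq_one_or b with hb | hb <;>
    simp_all

/-- For two linear orders on a finite set `X` and a coloring `s : X → {±1}`,
points of different colors have distinct pairs `(ι₊₊, ι₊₋)`, where `ι₊₊ x`
(resp. `ι₊₋ x`) is the length of the longest `s`-alternating sequence ending at
`x` increasing in both orders (resp. increasing in the first and decreasing
in the second). -/
theorem iota_pair_injective_on_colors {X : Type*} [Fintype X]
    (lt₁ lt₂ : X → X → Prop)
    (h₁ : IsStrictTotalOrder X lt₁) (h₂ : IsStrictTotalOrder X lt₂)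
    (s : X → ℤˣ) :
    ∀ x y : X, s x ≠ s y →
      (altChainLen lt₁ lt₂ s x, altChainLen lt₁ (fun a b => lt₂ b a) s x) ≠
      (altChainLen lt₁ lt₂ s y, altChainLen lt₁ (fun a b => lt₂ b a) s y) := by
  have htr : Transitive lt₁ := h₁.trans
  have hirr : ∀ a, ¬ lt₁ a a := h₁.irrefl
  intro x y hs heq
  rw [Prod.mk.injEq] at heq
  have hsy : s y = -s x := units_neg hs
  have hsx : s x = -s y := units_neg hs.symm
  rcases (show lt₁ x y ∨ x = y ∨ lt₁ y x by haveI := h₁; exact trichotomous_of _ x y) with h1 | h1 | h1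
  · rcases (show lt₂ x y ∨ x = y ∨ lt₂ y x by haveI := h₂; exact trichotomous_of _ x y) with h2 | h2 | h2
    · exact absurd heq.1 (ne_of_lt (altChainLen_lt htr hirr s hsy h1 h2))
    · exact hs (h2 ▸ rfl)
    · exact absurd heq.2 (ne_of_lt (altChainLen_lt htr hirr s hsy h1 h2))
  · exact hs (h1 ▸ rfl)
  · rcases (show lt₂ x y ∨ x = y ∨ lt₂ y x by haveI := h₂; exact trichotomous_of _ x y) with h2 | h2 | h2
    · exact absurd heq.2.symm (ne_of_lt (altChainLen_lt htr hirr s hsx h1 h2))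
    · exact hs (h2 ▸ rfl)
    · exact absurd heq.1.symm (ne_of_lt (altChainLen_lt htr hirr s hsx h1 h2))
end

section
/- Fix d, m ≥ 1. Let R be the set of functions r : [d] → {±1} with r(1) = +1, linearly ordered lexicographically, and let X = [m]^R. For i = 1, …, d define the linear order ≤_i on X by: for x ≠ y, letting r ∈ R be the first coordinate where they differ, x ≤_i y iff r(i)·x_r < r(i)·y_r. Then any sequence of distinct elements of X that is monotone with respect to every ≤_i (for each i, either nondecreasing or nonincreasing) has at most m elements, and m = |X|^{1/2^{d-1}}. -/
/-- `R`: the set of sign functions `r : [d] → {±1}` with `r 1 = +1`, a sign being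
encoded as a `Bool` (`true` = `+1`, `false` = `-1`). -/
abbrev Rfun (d : ℕ) (hd : 0 < d) : Type :=
  {r : Fin d → Bool // r ⟨0, hd⟩ = true}

/-- The lexicographic rank of `r ∈ R` (earlier coordinates are more significant). -/
def rkR {d : ℕ} {hd : 0 < d} (r : Rfun d hd) : ℕ :=
  ∑ i : Fin d, (cond (r.val i) 1 0) * 2 ^ (d - 1 - (i : ℕ))

/-- The first coordinate (in the lexicographic order on `R`) where `x` and `y`
differ. -/
noncomputable def firstDiff {d : ℕ} {hd : 0 < d} {m : ℕ}
    (x y : Rfun d hd → Fin m) (h : {r | x r ≠ y r}.Nonempty) : Rfun d hd :=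
  Function.argminOn rkR {r | x r ≠ y r} h

/-- The linear order `≤_i` on `X = [m]^R`: `x ≤_i y` iff `x = y` or, at the first
coordinate `r` where they differ, `x r < y r` when `r i = +1` and `x r > y r`
when `r i = -1`. -/
noncomputable def leIdx {d : ℕ} {hd : 0 < d} {m : ℕ} (i : Fin d)
    (x y : Rfun d hd → Fin m) : Prop :=
  x = y ∨ ∃ h : {r | x r ≠ y r}.Nonempty,
    (cond ((firstDiff x y h).val i)
      ((x (firstDiff x y h) : ℕ) < (y (firstDiff x y h) : ℕ))
      ((y (firstDiff x y h) : ℕ) < (x (firstDiff x y h) : ℕ)))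

lemma firstDiff_symm {d : ℕ} {hd : 0 < d} {m : ℕ} (x y : Rfun d hd → Fin m)
    (h : {r | x r ≠ y r}.Nonempty) (h' : {r | y r ≠ x r}.Nonempty) :
    firstDiff y x h' = firstDiff x y h := by
  have hset : {r | y r ≠ x r} = {r | x r ≠ y r} := by ext r; exact ne_comm
  unfold firstDiff
  congr 1

lemma firstDiff_mem {d : ℕ} {hd : 0 < d} {m : ℕ} (x y : Rfun d hd → Fin m)
    (h : {r | x r ≠ y r}.Nonempty) : x (firstDiff x y h) ≠ y (firstDiff x y h) :=
  Function.argminOn_mem rkR {r | x r ≠ y r} h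

lemma cardR (d : ℕ) (hd : 0 < d) :
    Fintype.card (Rfun d hd) = 2 ^ (d - 1) := by
  let i0 : Fin d := ⟨0, hd⟩
  let e : {r : Fin d → Bool // r i0 = true} ≃ ({i : Fin d // i ≠ i0} → Bool) :=
    { toFun := fun r i => r.val i
      invFun := fun f => ⟨fun i => if h : i = i0 then true else f ⟨i, h⟩, by simp⟩
      left_inv := by
        intro r; apply Subtype.ext; funext i
        by_cases h : i = i0
        · subst h; simp [r.prop]
        · simp [h]
      right_inv := by
        intro f; funext i; simp [i.prop] }
  rw [Fintype.card_congr e, Fintype.card_fun, Fintype.card_bool]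
  congr 1
  rw [Fintype.card_subtype_compl]
  simp

lemma seq_le_m (d m : ℕ) (hd : 0 < d) (hm : 1 ≤ m)
    (k : ℕ) (g : Fin k → (Rfun d hd → Fin m)) (hg : Function.Injective g)
    (hmono : ∀ i : Fin d,
      (∀ a b : Fin k, a ≤ b → leIdx i (g a) (g b)) ∨
      (∀ a b : Fin k, a ≤ b → leIdx i (g b) (g a))) :
    k ≤ m := by
  rcases Nat.lt_or_ge k 2 with hk | hk
  · omega
  have hgne : ∀ a b : Fin k, a ≠ b → g a ≠ g b := fun a b hab h => hab (hg h)
  have key : ∀ i : Fin d,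
      (∀ (a b : Fin k), a < b → ∀ (h : {r | g a r ≠ g b r}.Nonempty),
        (firstDiff (g a) (g b) h).val i
          = decide ((g a (firstDiff (g a) (g b) h) : ℕ) < (g b (firstDiff (g a) (g b) h) : ℕ)))
      ∨ (∀ (a b : Fin k), a < b → ∀ (h : {r | g a r ≠ g b r}.Nonempty),
        (firstDiff (g a) (g b) h).val i
          = !decide ((g a (firstDiff (g a) (g b) h) : ℕ) < (g b (firstDiff (g a) (g b) h) : ℕ))) := by
    intro i
    rcases hmono i with H | H
    · left; intro a b hab h
      rcases H a b hab.le with heq | ⟨hA, hc⟩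
      · exact absurd (hg heq) hab.ne
      · rw [Subsingleton.elim hA h] at hc
        rcases hb : (firstDiff (g a) (g b) h).val i with _ | _
        · rw [hb] at hc; simp only [cond_false] at hc
          simp [Nat.lt_asymm hc]
        · rw [hb] at hc; simp only [cond_true] at hc
          simp [hc]
    · right; intro a b hab h
      rcases H a b hab.le with heq | ⟨h', hc⟩
      · exact absurd (hg heq).symm hab.ne
      · rw [firstDiff_symm (g a) (g b) h h'] at hc
        rcases hb : (firstDiff (g a) (g b) h).val i with _ | _
        · rw [hb] at hc; simp only [cond_false] at hc
          simp [hc]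
        · rw [hb] at hc; simp only [cond_true] at hc
          simp [Nat.lt_asymm hc]
  have hsign : ∀ (a b : Fin k), a < b → ∀ (h : {r | g a r ≠ g b r}.Nonempty),
      ∀ (a' b' : Fin k), a' < b' → ∀ (h' : {r | g a' r ≠ g b' r}.Nonempty),
      decide ((g a (firstDiff (g a) (g b) h) : ℕ) < (g b (firstDiff (g a) (g b) h) : ℕ))
        = decide ((g a' (firstDiff (g a') (g b') h') : ℕ) < (g b' (firstDiff (g a') (g b') h') : ℕ)) := by
    intro a b hab h a' b' hab' h'
    rcases key ⟨0, hd⟩ with H | H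
    · rw [← H a b hab h, ← H a' b' hab' h',
        (firstDiff (g a) (g b) h).prop, (firstDiff (g a') (g b') h').prop]
    · have h1 := H a b hab h
      have h2 := H a' b' hab' h'
      rw [(firstDiff (g a) (g b) h).prop] at h1
      rw [(firstDiff (g a') (g b') h').prop] at h2
      rw [← Bool.not_not (decide _), ← h1, ← Bool.not_not (decide ((g a' _ : ℕ) < _)), ← h2]
  have hr : ∀ (a b : Fin k), a < b → ∀ (h : {r | g a r ≠ g b r}.Nonempty),
      ∀ (a' b' : Fin k), a' < b' → ∀ (h' : {r | g a' r ≠ g b' r}.Nonempty),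
      firstDiff (g a) (g b) h = firstDiff (g a') (g b') h' := by
    intro a b hab h a' b' hab' h'
    apply Subtype.ext; funext i
    rcases key i with H | H
    · rw [H a b hab h, H a' b' hab' h', hsign a b hab h a' b' hab' h']
    · rw [H a b hab h, H a' b' hab' h', hsign a b hab h a' b' hab' h']
  have h01 : (⟨0, by omega⟩ : Fin k) < ⟨1, by omega⟩ := by simp [Fin.lt_def]
  have hne0 : {r | g ⟨0, by omega⟩ r ≠ g ⟨1, by omega⟩ r}.Nonempty :=
    Function.ne_iff.mp (hgne _ _ (by simp [Fin.ext_iff]))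
  set rs := firstDiff (g ⟨0, by omega⟩) (g ⟨1, by omega⟩) hne0 with hrs
  have hkey2 : ∀ a b : Fin k, a < b → g a rs ≠ g b rs := by
    intro a b hlt
    have hgab : {r | g a r ≠ g b r}.Nonempty := Function.ne_iff.mp (hgne a b hlt.ne)
    have hmem := firstDiff_mem (g a) (g b) hgab
    rwa [hr a b hlt hgab ⟨0, by omega⟩ ⟨1, by omega⟩ h01 hne0] at hmem
  have hf : Function.Injective (fun a : Fin k => g a rs) := by
    intro a b hab
    by_contra hne
    rcases Ne.lt_or_gt hne with hlt | hlt
    · exact hkey2 a b hlt hab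
    · exact hkey2 b a hlt hab.symm
  calc k = Fintype.card (Fin k) := (Fintype.card_fin k).symm
    _ ≤ Fintype.card (Fin m) := Fintype.card_le_of_injective _ hf
    _ = m := Fintype.card_fin m

/-- Sharpness construction: on `X = [m]^R` with the `2^(d-1)` lexicographic-type
orders `≤_i`, any sequence of distinct elements monotone with respect to every
`≤_i` has at most `m` elements, and `m = |X| ^ (1/2^(d-1))`. -/
theorem monotone_seq_le_m (d m : ℕ) (hd : 0 < d) (hm : 1 ≤ m)
    (k : ℕ) (g : Fin k → (Rfun d hd → Fin m)) (hg : Function.Injective g)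
    (hmono : ∀ i : Fin d,
      (∀ a b : Fin k, a ≤ b → leIdx i (g a) (g b)) ∨
      (∀ a b : Fin k, a ≤ b → leIdx i (g b) (g a))) :
    k ≤ m ∧
    (Fintype.card (Rfun d hd → Fin m) : ℝ) ^ ((1 : ℝ) / 2 ^ (d - 1)) = (m : ℝ) := by
  refine ⟨seq_le_m d m hd hm k g hg hmono, ?_⟩
  rw [Fintype.card_fun, Fintype.card_fin, cardR d hd]
  push_cast
  rw [← Real.rpow_natCast (m : ℝ) (2 ^ (d - 1)), ← Real.rpow_mul (Nat.cast_nonneg m)]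
  rw [show ((2 ^ (d - 1) : ℕ) : ℝ) * ((1 : ℝ) / 2 ^ (d - 1)) = 1 by push_cast; field_simp]
  exact Real.rpow_one _
end
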